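/- arXiv:math/0608032 — 4 statements merged into one kernel-verified Lean document; each statement's English description precedes it below -/
import Mathlib

section
/- Let c, d be positive integers with gcd(c,d) = 1 and set r := c + d. For i ∈ ℤ/rℤ, say i is 'low' if its representative in {1,...,r} is ≤ c, and 'high' otherwise. Define n : (ℤ/rℤ)² → ℤ by n(i,j) = −1 if i is low and j is high, n(i,j) = +1 if i is high and j is low, and n(i,j) = 0 otherwise. Then for every pair (i,j) with n(i,j) = −1, there exists l ≥ 1 with n(i + l·d, j + l·d) ≠ 0, and for the least such l one has n(i + l·d, j + l·d) = +1. -/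
/-- `i` is "low" if its representative in `{1,...,r}` is `≤ c`. -/
def lowIdx (r c : ℕ) (i : ZMod r) : Prop := i.val ≠ 0 ∧ i.val ≤ c

instance (r c : ℕ) (i : ZMod r) : Decidable (lowIdx r c i) :=
  inferInstanceAs (Decidable (i.val ≠ 0 ∧ i.val ≤ c))

/-- The sign function: `-1` on (low, high), `+1` on (high, low), `0` otherwise. -/
def slopeSign (r c : ℕ) (i j : ZMod r) : ℤ :=
  if lowIdx r c i ∧ ¬ lowIdx r c j then -1
  else if ¬ lowIdx r c i ∧ lowIdx r c j then 1 else 0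

/-- The representative of `x` in `{1,...,r}`, as an integer. -/
def Wv (r : ℕ) (x : ZMod r) : ℤ := if x.val = 0 then (r : ℤ) else (x.val : ℤ)

/-- The indicator of "low". -/
def Gv (r c : ℕ) (x : ZMod r) : ℤ := if lowIdx r c x then 1 else 0

lemma slopeSign_eq (r c : ℕ) (i j : ZMod r) :
    slopeSign r c i j = Gv r c j - Gv r c i := by
  unfold slopeSign Gv
  by_cases hi : lowIdx r c i <;> by_cases hj : lowIdx r c j <;> simp [hi, hj]

lemma Wv_step (c d : ℕ) (hc : 0 < c) (hd : 0 < d) (x : ZMod (c + d)) :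
    Wv (c + d) (x + (d : ZMod (c + d)))
      = Wv (c + d) x + d - (c + d) + (c + d) * Gv (c + d) c x := by
  have hr : 0 < c + d := by omega
  haveI : NeZero (c + d) := ⟨hr.ne'⟩
  have hv : x.val < c + d := ZMod.val_lt x
  have hdval : ((d : ZMod (c + d))).val = d := by
    rw [ZMod.val_natCast]; exact Nat.mod_eq_of_lt (by omega)
  have hadd : (x + (d : ZMod (c + d))).val = (x.val + d) % (c + d) := by
    rw [ZMod.val_add, hdval]
  unfold Wv Gv lowIdx
  rw [hadd]
  by_cases hcase : x.val + d < c + d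
  · have hm : (x.val + d) % (c + d) = x.val + d := Nat.mod_eq_of_lt hcase
    rw [hm]
    by_cases hl : x.val ≠ 0 ∧ x.val ≤ c
    · erw [if_pos (show lowIdx (c + d) c x from hl)]; split_ifs <;> push_cast <;> omega
    · erw [if_neg (show ¬ lowIdx (c + d) c x from hl)]; split_ifs <;> push_cast <;> omega
  · have hm : (x.val + d) % (c + d) = x.val + d - (c + d) := by
      have h2 : x.val + d - (c + d) < c + d := by omega
      rw [Nat.mod_eq_sub_mod (by omega), Nat.mod_eq_of_lt h2]
    rw [hm]
    by_cases hl : x.val ≠ 0 ∧ x.val ≤ c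
    · erw [if_pos (show lowIdx (c + d) c x from hl)]; split_ifs <;> push_cast <;> omega
    · erw [if_neg (show ¬ lowIdx (c + d) c x from hl)]; split_ifs <;> push_cast <;> omega

lemma Wv_telescope (c d : ℕ) (hc : 0 < c) (hd : 0 < d) (x : ZMod (c + d)) (l : ℕ) :
    Wv (c + d) (x + (l : ZMod (c + d)) * (d : ZMod (c + d)))
      = Wv (c + d) x + l * ((d : ℤ) - (c + d))
        + (c + d) * ∑ k ∈ Finset.range l, Gv (c + d) c (x + (k : ZMod (c + d)) * (d : ZMod (c + d))) := by
  induction l with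
  | zero => simp
  | succ n ih =>
    have hx : x + ((n + 1 : ℕ) : ZMod (c + d)) * (d : ZMod (c + d))
        = (x + (n : ZMod (c + d)) * (d : ZMod (c + d))) + (d : ZMod (c + d)) := by
      push_cast; ring
    rw [hx, Wv_step c d hc hd, ih, Finset.sum_range_succ]
    push_cast; ring

lemma Wv_le (r : ℕ) (hr : 0 < r) (x : ZMod r) : 1 ≤ Wv r x ∧ Wv r x ≤ r := by
  haveI : NeZero r := ⟨hr.ne'⟩
  have hv : x.val < r := ZMod.val_lt x
  unfold Wv; split_ifs <;> constructor <;> push_cast <;> omega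

lemma Wv_of_low (r c : ℕ) (x : ZMod r) (h : lowIdx r c x) : Wv r x ≤ c := by
  obtain ⟨h0, h1⟩ := h
  unfold Wv; split_ifs with h <;> [exact absurd h h0; exact_mod_cast h1]

lemma Wv_of_high (c d : ℕ) (hc : 0 < c) (hd : 0 < d) (x : ZMod (c + d))
    (h : ¬ lowIdx (c + d) c x) : (c : ℤ) + 1 ≤ Wv (c + d) x := by
  haveI : NeZero (c + d) := ⟨by omega⟩
  unfold lowIdx at h
  push_neg at h
  unfold Wv
  split_ifs with h0
  · push_cast; omega
  · have := h h0; push_cast; omega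

/-- starting at a pair of value `−1`, along translation by `d` on `(ℤ/rℤ)²`,
some later value is nonzero and the first nonzero value is `+1`. -/
theorem stmt3 (c d : ℕ) (hc : 0 < c) (hd : 0 < d) (hcd : Nat.gcd c d = 1)
    (i j : ZMod (c + d)) (hij : slopeSign (c + d) c i j = -1) :
    (∃ l : ℕ, 1 ≤ l ∧
      slopeSign (c + d) c (i + (l : ZMod (c + d)) * (d : ZMod (c + d)))
        (j + (l : ZMod (c + d)) * (d : ZMod (c + d))) ≠ 0) ∧
    ∀ l : ℕ, 1 ≤ l →
      slopeSign (c + d) c (i + (l : ZMod (c + d)) * (d : ZMod (c + d)))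
        (j + (l : ZMod (c + d)) * (d : ZMod (c + d))) ≠ 0 →
      (∀ l' : ℕ, 1 ≤ l' → l' < l →
        slopeSign (c + d) c (i + (l' : ZMod (c + d)) * (d : ZMod (c + d)))
          (j + (l' : ZMod (c + d)) * (d : ZMod (c + d))) = 0) →
      slopeSign (c + d) c (i + (l : ZMod (c + d)) * (d : ZMod (c + d)))
        (j + (l : ZMod (c + d)) * (d : ZMod (c + d))) = 1 := by
  have hr : 0 < c + d := by omega
  haveI : NeZero (c + d) := ⟨hr.ne'⟩
  have hlowi : lowIdx (c + d) c i ∧ ¬ lowIdx (c + d) c j := by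
    by_contra h
    unfold slopeSign at hij
    rw [if_neg h] at hij
    split_ifs at hij <;> omega
  constructor
  · refine ⟨c + d, by omega, ?_⟩
    have hz : ((c + d : ℕ) : ZMod (c + d)) = 0 := by
      exact_mod_cast ZMod.natCast_self (c + d)
    rw [hz, zero_mul, add_zero, add_zero, hij]
    omega
  · intro l hl hne hprev
    -- slopeSign is -1, 0, or 1; rule out -1.
    by_contra hne1
    have hneg : slopeSign (c + d) c (i + (l : ZMod (c + d)) * (d : ZMod (c + d)))
        (j + (l : ZMod (c + d)) * (d : ZMod (c + d))) = -1 := by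
      unfold slopeSign at hne hne1 ⊢
      split_ifs at hne hne1 ⊢ <;> omega
    have hlowl : lowIdx (c + d) c (i + (l : ZMod (c + d)) * (d : ZMod (c + d))) ∧
        ¬ lowIdx (c + d) c (j + (l : ZMod (c + d)) * (d : ZMod (c + d))) := by
      by_contra h
      unfold slopeSign at hneg
      rw [if_neg h] at hneg
      split_ifs at hneg <;> omega
    -- the G-sums for i and j differ by exactly 1 (from the k = 0 term)
    have hsum : ∑ k ∈ Finset.range l, Gv (c + d) c (i + (k : ZMod (c + d)) * (d : ZMod (c + d)))
        = (∑ k ∈ Finset.range l, Gv (c + d) c (j + (k : ZMod (c + d)) * (d : ZMod (c + d)))) + 1 := by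
      have key : ∀ k ∈ Finset.range l,
          Gv (c + d) c (i + (k : ZMod (c + d)) * (d : ZMod (c + d)))
            = Gv (c + d) c (j + (k : ZMod (c + d)) * (d : ZMod (c + d)))
              + (if k = 0 then 1 else 0) := by
        intro k hk
        rcases Nat.eq_zero_or_pos k with h0 | h0
        · subst h0
          simp only [if_pos rfl, Nat.cast_zero, zero_mul, add_zero]
          unfold Gv
          rw [if_pos hlowi.1, if_neg hlowi.2]
          norm_num
        · have hz := hprev k h0 (Finset.mem_range.mp hk)
          rw [slopeSign_eq] at hz
          rw [if_neg h0.ne']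
          omega
      rw [Finset.sum_congr rfl key, Finset.sum_add_distrib,
        Finset.sum_ite_eq' (Finset.range l) 0 (fun _ => (1 : ℤ)),
        if_pos (Finset.mem_range.mpr (by omega))]
    have hti := Wv_telescope c d hc hd i l
    have htj := Wv_telescope c d hc hd j l
    -- bounds
    have h1 := Wv_of_low (c + d) c i hlowi.1
    have h2 := Wv_of_high c d hc hd j hlowi.2
    have h3 := Wv_of_low (c + d) c _ hlowl.1
    have h4 := Wv_of_high c d hc hd _ hlowl.2
    have h5 := (Wv_le (c + d) hr i).1
    have h6 := (Wv_le (c + d) hr j).2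
    rw [hsum, mul_add, mul_one] at hti
    push_cast at h6 ⊢
    omega
end

section
/- Let c_1, d_1, c_2, d_2 be positive integers with gcd(c_1,d_1) = gcd(c_2,d_2) = 1, r_1 := c_1 + d_1, r_2 := c_2 + d_2, and assume c_2·d_1 < c_1·d_2 (i.e., d_1/r_1 < d_2/r_2). For (i,j) ∈ (ℤ/r_2ℤ) × (ℤ/r_1ℤ), using representatives in {1,...,r_2} and {1,...,r_1} respectively, define n(i,j) = −1 if i ≤ c_2 and j > c_1, n(i,j) = +1 if i > c_2 and j ≤ c_1, and n(i,j) = 0 otherwise. Then for every pair (i,j) with n(i,j) = −1, there exists l ≥ 1 with n(i + l·d_2, j + l·d_1) ≠ 0, and for the least such l one has n(i + l·d_2, j + l·d_1) = +1. -/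
namespace Stmt4Aux

/-- ceiling division `⌈x/r⌉`. -/
def cd (x r : ℕ) : ℕ := if x = 0 then 0 else (x - 1) / r + 1

lemma cd_le_iff {r : ℕ} (hr : 0 < r) (x k : ℕ) : cd x r ≤ k ↔ x ≤ k * r := by
  unfold cd
  split
  · subst ‹x = 0›; simp
  · have h := Nat.div_lt_iff_lt_mul hr (x := x - 1) (y := k)
    omega

lemma cd_one {r : ℕ} (x : ℕ) (h1 : 1 ≤ x) (h2 : x ≤ r) : cd x r = 1 := by
  unfold cd
  rw [if_neg (by omega), Nat.div_eq_of_lt (by omega)]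

lemma cd_step (c d : ℕ) (hc : 0 < c) (hd : 0 < d) (x : ℕ) :
    cd (x + d) (c + d) = cd x (c + d) +
      (if x % (c + d) ≠ 0 ∧ x % (c + d) ≤ c then 0 else 1) := by
  set r := c + d with hrdef
  have hr : 0 < r := by omega
  rcases Nat.eq_zero_or_pos x with h0 | h0
  · subst h0
    simp only [Nat.zero_mod, ne_eq, not_true_eq_false, false_and, if_false, Nat.zero_add]
    unfold cd
    rw [if_pos rfl, if_neg (by omega), Nat.div_eq_of_lt (by omega)]
  · set q := (x - 1) / r with hq
    set t := (x - 1) % r with ht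
    have hdm : q * r + t = x - 1 := by
      rw [hq, ht, Nat.mul_comm]; exact Nat.div_add_mod _ _
    have htlt : t < r := Nat.mod_lt _ hr
    have hx' : x = t + 1 + q * r := by omega
    have hs : x % r = (t + 1) % r := by rw [hx', Nat.add_mul_mod_self_right]
    have hxd : x + d - 1 = t + d + q * r := by omega
    by_cases hcase : t < c
    · have h1 : (x + d - 1) / r = q := by
        rw [hxd, Nat.add_mul_div_right _ _ hr, Nat.div_eq_of_lt (by omega), Nat.zero_add]
      have hsv : x % r = t + 1 := by rw [hs]; exact Nat.mod_eq_of_lt (by omega)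
      rw [if_pos ⟨by omega, by omega⟩]
      unfold cd
      rw [if_neg (by omega), if_neg (by omega), h1]
    · have htd : (t + d) / r = 1 := Nat.div_eq_of_lt_le (by omega) (by omega)
      have h1 : (x + d - 1) / r = q + 1 := by
        rw [hxd, Nat.add_mul_div_right _ _ hr, htd]; omega
      have hcond : ¬ (x % r ≠ 0 ∧ x % r ≤ c) := by
        rw [hs]
        rcases Nat.eq_or_lt_of_le (Nat.succ_le_of_lt htlt) with he | hl
        · rw [← he, Nat.mod_self]; simp
        · rw [Nat.mod_eq_of_lt (by omega)]; omega
      rw [if_neg hcond]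
      unfold cd
      rw [if_neg (by omega), if_neg (by omega), h1]

lemma zval {n : ℕ} (hn : 0 < n) (z : ZMod n) (l d : ℕ) :
    (z + (l : ZMod n) * (d : ZMod n)).val = (z.val + l * d) % n := by
  haveI : NeZero n := ⟨hn.ne'⟩
  calc (z + (l : ZMod n) * (d : ZMod n)).val
      = (((z.val + l * d : ℕ)) : ZMod n).val := by
        rw [Nat.cast_add, Nat.cast_mul, ZMod.natCast_rightInverse z]
    _ = (z.val + l * d) % n := ZMod.val_natCast _ _

end Stmt4Aux

/-- The sign function on `(ℤ/r₂ℤ) × (ℤ/r₁ℤ)`, using representatives in `{1,...,r}`: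
`-1` if `i ≤ c₂` and `j > c₁`, `+1` if `i > c₂` and `j ≤ c₁`, `0` otherwise. -/
def slopeSign2 (r₂ c₂ r₁ c₁ : ℕ) (i : ZMod r₂) (j : ZMod r₁) : ℤ :=
  if (i.val ≠ 0 ∧ i.val ≤ c₂) ∧ ¬(j.val ≠ 0 ∧ j.val ≤ c₁) then -1
  else if ¬(i.val ≠ 0 ∧ i.val ≤ c₂) ∧ (j.val ≠ 0 ∧ j.val ≤ c₁) then 1 else 0

namespace Stmt4Aux

/-- translated sign along the orbit -/
def sgn2 (c₁ d₁ c₂ d₂ : ℕ) (i : ZMod (c₂ + d₂)) (j : ZMod (c₁ + d₁)) (l : ℕ) : ℤ :=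
  slopeSign2 (c₂ + d₂) c₂ (c₁ + d₁) c₁
    (i + (l : ZMod (c₂ + d₂)) * (d₂ : ZMod (c₂ + d₂)))
    (j + (l : ZMod (c₁ + d₁)) * (d₁ : ZMod (c₁ + d₁)))

lemma sgn2_eq (c₁ d₁ c₂ d₂ : ℕ) (h₂ : 0 < c₂ + d₂) (h₁ : 0 < c₁ + d₁)
    (i : ZMod (c₂ + d₂)) (j : ZMod (c₁ + d₁)) (l : ℕ) :
    sgn2 c₁ d₁ c₂ d₂ i j l =
      (if (j.val + l * d₁) % (c₁ + d₁) ≠ 0 ∧ (j.val + l * d₁) % (c₁ + d₁) ≤ c₁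
        then (1 : ℤ) else 0)
      - (if (i.val + l * d₂) % (c₂ + d₂) ≠ 0 ∧ (i.val + l * d₂) % (c₂ + d₂) ≤ c₂
        then (1 : ℤ) else 0) := by
  unfold sgn2 slopeSign2
  rw [zval h₂, zval h₁]
  by_cases hA : ((i.val + l * d₂) % (c₂ + d₂) ≠ 0 ∧ (i.val + l * d₂) % (c₂ + d₂) ≤ c₂) <;>
    by_cases hB : ((j.val + l * d₁) % (c₁ + d₁) ≠ 0 ∧ (j.val + l * d₁) % (c₁ + d₁) ≤ c₁) <;>
    simp [hA, hB]

/-- the telescoped partial-sum function -/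
def Tfun (c₁ d₁ c₂ d₂ : ℕ) (i : ZMod (c₂ + d₂)) (j : ZMod (c₁ + d₁)) (L : ℕ) : ℤ :=
  (cd (i.val + L * d₂) (c₂ + d₂) : ℤ) - (cd (j.val + L * d₁) (c₁ + d₁) : ℤ)

theorem stmt4_main (c₁ d₁ c₂ d₂ : ℕ) (hc₁ : 0 < c₁) (hd₁ : 0 < d₁) (hc₂ : 0 < c₂) (hd₂ : 0 < d₂)
    (hlt : c₂ * d₁ < c₁ * d₂)
    (i : ZMod (c₂ + d₂)) (j : ZMod (c₁ + d₁))
    (hij : slopeSign2 (c₂ + d₂) c₂ (c₁ + d₁) c₁ i j = -1) :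
    (∃ l : ℕ, 1 ≤ l ∧ sgn2 c₁ d₁ c₂ d₂ i j l ≠ 0) ∧
    ∀ l : ℕ, 1 ≤ l → sgn2 c₁ d₁ c₂ d₂ i j l ≠ 0 →
      (∀ l' : ℕ, 1 ≤ l' → l' < l → sgn2 c₁ d₁ c₂ d₂ i j l' = 0) →
      sgn2 c₁ d₁ c₂ d₂ i j l = 1 := by
  have hr₂ : 0 < c₂ + d₂ := by omega
  have hr₁ : 0 < c₁ + d₁ := by omega
  haveI : NeZero (c₂ + d₂) := ⟨hr₂.ne'⟩
  haveI : NeZero (c₁ + d₁) := ⟨hr₁.ne'⟩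
  have hjlt : j.val < c₁ + d₁ := ZMod.val_lt j
  have hilt : i.val < c₂ + d₂ := ZMod.val_lt i
  -- extract conditions from hij
  have h1 : (i.val ≠ 0 ∧ i.val ≤ c₂) ∧ ¬(j.val ≠ 0 ∧ j.val ≤ c₁) := by
    by_contra hcon
    unfold slopeSign2 at hij
    rw [if_neg hcon] at hij
    split_ifs at hij <;> omega
  -- strict slope comparison
  have hd₁d₂ : d₁ * (c₂ + d₂) + 1 ≤ d₂ * (c₁ + d₁) := by nlinarith [hlt]
  -- key recursion: T (l+1) = T l + N l
  have key : ∀ l : ℕ, Tfun c₁ d₁ c₂ d₂ i j (l + 1) =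
      Tfun c₁ d₁ c₂ d₂ i j l + sgn2 c₁ d₁ c₂ d₂ i j l := by
    intro l
    have e₂ : i.val + (l + 1) * d₂ = (i.val + l * d₂) + d₂ := by ring
    have e₁ : j.val + (l + 1) * d₁ = (j.val + l * d₁) + d₁ := by ring
    have s₂ := cd_step c₂ d₂ hc₂ hd₂ (i.val + l * d₂)
    have s₁ := cd_step c₁ d₁ hc₁ hd₁ (j.val + l * d₁)
    rw [sgn2_eq c₁ d₁ c₂ d₂ hr₂ hr₁ i j l]
    unfold Tfun
    rw [e₂, e₁, s₂, s₁]
    split_ifs <;> push_cast <;> ring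
  -- N l is in {-1, 0, 1}
  have hNrange : ∀ l : ℕ, sgn2 c₁ d₁ c₂ d₂ i j l = -1 ∨
      sgn2 c₁ d₁ c₂ d₂ i j l = 0 ∨ sgn2 c₁ d₁ c₂ d₂ i j l = 1 := by
    intro l
    unfold sgn2 slopeSign2
    split_ifs <;> simp
  -- N 0 = -1
  have hN0 : sgn2 c₁ d₁ c₂ d₂ i j 0 = -1 := by
    unfold sgn2
    simpa using hij
  -- T 0 value
  have hcd0i : cd i.val (c₂ + d₂) = 1 := cd_one _ (by omega) (by omega)
  have hcdj : cd j.val (c₁ + d₁) ≤ 1 := by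
    rcases Nat.eq_zero_or_pos j.val with h | h
    · unfold cd; simp [h]
    · rw [cd_one _ h (by omega)]
  have hT0 : Tfun c₁ d₁ c₂ d₂ i j 0 = 1 - (cd j.val (c₁ + d₁) : ℤ) := by
    unfold Tfun
    simp only [Nat.zero_mul, Nat.add_zero, hcd0i]
    push_cast; ring
  -- master inequality: T L ≥ - cd j.val r₁  ( = T 0 - 1 )
  have master : ∀ L : ℕ, cd (j.val + L * d₁) (c₁ + d₁) ≤
      cd (i.val + L * d₂) (c₂ + d₂) + cd j.val (c₁ + d₁) := by
    intro L
    set k := cd (i.val + L * d₂) (c₂ + d₂) with hk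
    have hk1 : i.val + L * d₂ ≤ k * (c₂ + d₂) := (cd_le_iff hr₂ _ _).mp le_rfl
    have h2 : L * d₁ * (c₂ + d₂) ≤ k * (c₁ + d₁) * (c₂ + d₂) := by
      calc L * d₁ * (c₂ + d₂) = L * (d₁ * (c₂ + d₂)) := by ring
        _ ≤ L * (d₂ * (c₁ + d₁)) := Nat.mul_le_mul_left _ (by omega)
        _ = L * d₂ * (c₁ + d₁) := by ring
        _ ≤ (i.val + L * d₂) * (c₁ + d₁) := Nat.mul_le_mul_right _ (by omega)
        _ ≤ (k * (c₂ + d₂)) * (c₁ + d₁) := Nat.mul_le_mul_right _ hk1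
        _ = k * (c₁ + d₁) * (c₂ + d₂) := by ring
    have h3 : L * d₁ ≤ k * (c₁ + d₁) := Nat.le_of_mul_le_mul_right h2 hr₂
    rcases Nat.eq_zero_or_pos j.val with h | h
    · rw [h]
      have : cd (0 + L * d₁) (c₁ + d₁) ≤ k := by
        rw [cd_le_iff hr₁]; omega
      have h0 : cd 0 (c₁ + d₁) = 0 := by unfold cd; simp
      omega
    · rw [cd_one _ h (by omega)]
      have : cd (j.val + L * d₁) (c₁ + d₁) ≤ k + 1 := by
        rw [cd_le_iff hr₁]
        have : (k + 1) * (c₁ + d₁) = k * (c₁ + d₁) + (c₁ + d₁) := by ring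
        omega
      omega
  -- constancy under zeros
  have step : ∀ m : ℕ, 1 ≤ m → (∀ l' : ℕ, 1 ≤ l' → l' < m → sgn2 c₁ d₁ c₂ d₂ i j l' = 0) →
      Tfun c₁ d₁ c₂ d₂ i j m = Tfun c₁ d₁ c₂ d₂ i j 0 - 1 := by
    intro m
    induction m with
    | zero => omega
    | succ m ih =>
      intro _ hz
      rcases Nat.eq_zero_or_pos m with h | h
      · subst h
        rw [key 0, hN0]; ring
      · rw [key m, hz m h (by omega), ih h (fun l' a b => hz l' a (by omega)), add_zero]
  constructor
  · -- existence
    by_contra hcon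
    push_neg at hcon
    set M := 2 * ((c₁ + d₁) * (c₂ + d₂)) + 1 with hM
    have hM1 : 1 ≤ M := by omega
    have hTM : Tfun c₁ d₁ c₂ d₂ i j M = Tfun c₁ d₁ c₂ d₂ i j 0 - 1 :=
      step M hM1 (fun l' a _ => hcon l' a)
    -- growth estimate
    set k₁ := cd (j.val + M * d₁) (c₁ + d₁) with hk₁
    have hMd₁ : 1 ≤ M * d₁ := Nat.mul_pos (by omega) hd₁
    have hk₁pos : 1 ≤ k₁ := by
      by_contra hc
      have := (cd_le_iff hr₁ (j.val + M * d₁) 0).mp (by omega)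
      omega
    have hlow : ¬ (j.val + M * d₁ ≤ (k₁ - 1) * (c₁ + d₁)) := by
      intro hc
      have := (cd_le_iff hr₁ (j.val + M * d₁) (k₁ - 1)).mpr hc
      omega
    have hsub : (k₁ - 1) * (c₁ + d₁) + (c₁ + d₁) = k₁ * (c₁ + d₁) := by
      have h : k₁ - 1 + 1 = k₁ := by omega
      calc (k₁ - 1) * (c₁ + d₁) + (c₁ + d₁) = (k₁ - 1 + 1) * (c₁ + d₁) := by ring
        _ = k₁ * (c₁ + d₁) := by rw [h]
    have hlow' : k₁ * (c₁ + d₁) < j.val + M * d₁ + (c₁ + d₁) := by omega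
    have want : k₁ * (c₂ + d₂) < i.val + M * d₂ := by
      have c1 : k₁ * (c₁ + d₁) * (c₂ + d₂) < (j.val + M * d₁ + (c₁ + d₁)) * (c₂ + d₂) :=
        (Nat.mul_lt_mul_right hr₂).mpr hlow'
      have c2 : (j.val + M * d₁ + (c₁ + d₁)) * (c₂ + d₂) ≤
          2 * ((c₁ + d₁) * (c₂ + d₂)) + M * (d₁ * (c₂ + d₂)) := by
        have hj' : j.val * (c₂ + d₂) ≤ (c₁ + d₁) * (c₂ + d₂) :=
          Nat.mul_le_mul_right _ (by omega)
        calc (j.val + M * d₁ + (c₁ + d₁)) * (c₂ + d₂)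
            = j.val * (c₂ + d₂) + M * (d₁ * (c₂ + d₂)) + (c₁ + d₁) * (c₂ + d₂) := by ring
          _ ≤ (c₁ + d₁) * (c₂ + d₂) + M * (d₁ * (c₂ + d₂)) + (c₁ + d₁) * (c₂ + d₂) := by
              omega
          _ = 2 * ((c₁ + d₁) * (c₂ + d₂)) + M * (d₁ * (c₂ + d₂)) := by ring
      have c3 : M * (d₁ * (c₂ + d₂)) + M ≤ M * (d₂ * (c₁ + d₁)) := by
        calc M * (d₁ * (c₂ + d₂)) + M = M * (d₁ * (c₂ + d₂) + 1) := by ring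
          _ ≤ M * (d₂ * (c₁ + d₁)) := Nat.mul_le_mul_left _ hd₁d₂
      have c4 : 2 * ((c₁ + d₁) * (c₂ + d₂)) < M := by omega
      have c5 : M * (d₂ * (c₁ + d₁)) ≤ (i.val + M * d₂) * (c₁ + d₁) := by
        calc M * (d₂ * (c₁ + d₁)) = (M * d₂) * (c₁ + d₁) := by ring
          _ ≤ (i.val + M * d₂) * (c₁ + d₁) := Nat.mul_le_mul_right _ (by omega)
      have c6 : (k₁ * (c₂ + d₂)) * (c₁ + d₁) < (i.val + M * d₂) * (c₁ + d₁) := by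
        have e : (k₁ * (c₂ + d₂)) * (c₁ + d₁) = k₁ * (c₁ + d₁) * (c₂ + d₂) := by ring
        omega
      exact (Nat.mul_lt_mul_right hr₁).mp c6
    have hbig : k₁ + 1 ≤ cd (i.val + M * d₂) (c₂ + d₂) := by
      by_contra hc
      have := (cd_le_iff hr₂ (i.val + M * d₂) k₁).mp (by omega)
      omega
    have hTMbig : (1 : ℤ) ≤ Tfun c₁ d₁ c₂ d₂ i j M := by
      unfold Tfun
      rw [← hk₁]
      push_cast
      omega
    rw [hTM, hT0] at hTMbig
    omega
  · -- first nonzero is +1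
    intro l hl hne hz
    have hTl : Tfun c₁ d₁ c₂ d₂ i j l = Tfun c₁ d₁ c₂ d₂ i j 0 - 1 := step l hl hz
    have hk := key l
    have hTlow : Tfun c₁ d₁ c₂ d₂ i j 0 - 1 ≤ Tfun c₁ d₁ c₂ d₂ i j (l + 1) := by
      have hm := master (l + 1)
      rw [hT0]
      unfold Tfun
      push_cast
      omega
    have hrange := hNrange l
    omega

end Stmt4Aux

/-- along simultaneous translation by `(d₂, d₁)`, the first nonzero
value of `n` after a value `−1` is always `+1`. -/
theorem stmt4 (c₁ d₁ c₂ d₂ : ℕ) (hc₁ : 0 < c₁) (hd₁ : 0 < d₁) (hc₂ : 0 < c₂) (hd₂ : 0 < d₂)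
    (hg₁ : Nat.gcd c₁ d₁ = 1) (hg₂ : Nat.gcd c₂ d₂ = 1)
    (hlt : c₂ * d₁ < c₁ * d₂)
    (i : ZMod (c₂ + d₂)) (j : ZMod (c₁ + d₁))
    (hij : slopeSign2 (c₂ + d₂) c₂ (c₁ + d₁) c₁ i j = -1) :
    (∃ l : ℕ, 1 ≤ l ∧
      slopeSign2 (c₂ + d₂) c₂ (c₁ + d₁) c₁
        (i + (l : ZMod (c₂ + d₂)) * (d₂ : ZMod (c₂ + d₂)))
        (j + (l : ZMod (c₁ + d₁)) * (d₁ : ZMod (c₁ + d₁))) ≠ 0) ∧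
    ∀ l : ℕ, 1 ≤ l →
      slopeSign2 (c₂ + d₂) c₂ (c₁ + d₁) c₁
        (i + (l : ZMod (c₂ + d₂)) * (d₂ : ZMod (c₂ + d₂)))
        (j + (l : ZMod (c₁ + d₁)) * (d₁ : ZMod (c₁ + d₁))) ≠ 0 →
      (∀ l' : ℕ, 1 ≤ l' → l' < l →
        slopeSign2 (c₂ + d₂) c₂ (c₁ + d₁) c₁
          (i + (l' : ZMod (c₂ + d₂)) * (d₂ : ZMod (c₂ + d₂)))
          (j + (l' : ZMod (c₁ + d₁)) * (d₁ : ZMod (c₁ + d₁))) = 0) →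
      slopeSign2 (c₂ + d₂) c₂ (c₁ + d₁) c₁
        (i + (l : ZMod (c₂ + d₂)) * (d₂ : ZMod (c₂ + d₂)))
        (j + (l : ZMod (c₁ + d₁)) * (d₁ : ZMod (c₁ + d₁))) = 1 := by
  exact Stmt4Aux.stmt4_main c₁ d₁ c₂ d₂ hc₁ hd₁ hc₂ hd₂ hlt i j hij
end

section
/- Let R be a commutative ring, I an ideal of R with I² = 0, and n a positive integer. Then the kernel of the induced ring homomorphism W_n(R) → W_n(R/I) on truncated Witt vectors of length n is a nilpotent ideal; in particular, any Witt vector in W_n(R) all of whose components lie in I maps to a nilpotent element, and the kernel ideal K satisfies K^N = 0 for some N (depending only on n and the prime p). -/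
/-- The ring homomorphism `W_n(R) → W_n(S)` induced functorially by `f : R →+* S`. -/
noncomputable def truncatedWittVectorMap (p n : ℕ) [hp : Fact p.Prime]
    {R S : Type*} [CommRing R] [CommRing S] (f : R →+* S) :
    TruncatedWittVector p n R →+* TruncatedWittVector p n S :=
  RingHom.liftOfRightInverse (WittVector.truncate n) TruncatedWittVector.out
    TruncatedWittVector.truncateFun_out
    ⟨(WittVector.truncate n).comp (WittVector.map f), fun x hx => by
      rw [WittVector.mem_ker_truncate] at hx
      rw [RingHom.mem_ker, RingHom.comp_apply, ← RingHom.mem_ker,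
        WittVector.mem_ker_truncate]
      intro i hi
      rw [WittVector.map_coeff, hx i hi, map_zero]⟩


open MvPolynomial

section PolyLemmas

variable {σ : Type*}

lemma sub_aeval_mem_span (A : Set σ) [DecidablePred (· ∈ A)]
    (f : MvPolynomial σ ℤ) :
    f - aeval (fun i => if i ∈ A then (0 : MvPolynomial σ ℤ) else X i) f ∈
      Ideal.span (X '' A : Set (MvPolynomial σ ℤ)) := by
  induction f using MvPolynomial.induction_on with
  | C a => simp
  | add p q hp hq =>
      rw [map_add]
      have h := Ideal.add_mem _ hp hq
      convert h using 1
      ring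
  | mul_X q i hq =>
      rw [map_mul, aeval_X]
      by_cases hi : i ∈ A
      · rw [if_pos hi, mul_zero, sub_zero]
        exact Ideal.mul_mem_left _ q (Ideal.subset_span ⟨i, hi, rfl⟩)
      · rw [if_neg hi]
        have h : q * X i - (aeval fun i => if i ∈ A then (0 : MvPolynomial σ ℤ) else X i) q * X i
            = (q - (aeval fun i => if i ∈ A then (0 : MvPolynomial σ ℤ) else X i) q) * X i := by
          ring
        rw [h]
        exact Ideal.mul_mem_right _ _ hq

lemma mem_span_X_of_aeval_eq_zero (A : Set σ) [DecidablePred (· ∈ A)]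
    {f : MvPolynomial σ ℤ}
    (h : aeval (fun i => if i ∈ A then (0 : MvPolynomial σ ℤ) else X i) f = 0) :
    f ∈ Ideal.span (X '' A : Set (MvPolynomial σ ℤ)) := by
  have h2 := sub_aeval_mem_span A f
  rwa [h, sub_zero] at h2

lemma mem_span_monomial_of_mem_inter {A B : Set σ}
    (hAB : ∀ a ∈ A, ∀ b ∈ B, a ≠ b) {f : MvPolynomial σ ℤ}
    (hA : f ∈ Ideal.span (X '' A : Set (MvPolynomial σ ℤ)))
    (hB : f ∈ Ideal.span (X '' B : Set (MvPolynomial σ ℤ))) :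
    f ∈ Ideal.span ((fun m => monomial m (1 : ℤ)) ''
      {m | ∃ a ∈ A, ∃ b ∈ B, m = Finsupp.single a 1 + Finsupp.single b 1}) := by
  classical
  rw [mem_ideal_span_X_image] at hA hB
  rw [mem_ideal_span_monomial_image]
  intro m hm
  obtain ⟨a, ha, hma⟩ := hA m hm
  obtain ⟨b, hb, hmb⟩ := hB m hm
  refine ⟨_, ⟨a, ha, b, hb, rfl⟩, ?_⟩
  rw [Finsupp.le_def]
  intro i
  rw [Finsupp.add_apply, Finsupp.single_apply, Finsupp.single_apply]
  rcases eq_or_ne a i with rfl | hia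
  · rw [if_pos rfl, if_neg (fun h => hAB a ha b hb h.symm)]
    omega
  · rw [if_neg hia]
    rcases eq_or_ne b i with rfl | hib
    · rw [if_pos rfl]; omega
    · rw [if_neg hib]; omega

end PolyLemmas

section WittLemmas

variable {p : ℕ} [Fact p.Prime] {R : Type*} [CommRing R]

lemma wittVector_mul_coeff_eq_zero (I : Ideal R) (hI : I ^ 2 = ⊥)
    (x y : WittVector p R) (hx : ∀ i, x.coeff i ∈ I) (hy : ∀ i, y.coeff i ∈ I)
    (k : ℕ) : (x * y).coeff k = 0 := by
  classical
  set σ := (Fin 2 × ℕ)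
  set A : Set σ := {v | v.1 = 0} with hA
  set B : Set σ := {v | v.1 = 1} with hB
  set XX : WittVector p (MvPolynomial σ ℤ) := WittVector.mk p fun i => X (0, i) with hXX
  set YY : WittVector p (MvPolynomial σ ℤ) := WittVector.mk p fun i => X (1, i) with hYY
  set φ : MvPolynomial σ ℤ →+* R :=
    (aeval (fun v : σ => if v.1 = 0 then x.coeff v.2 else y.coeff v.2)).toRingHom with hφ
  have hφX : WittVector.map φ XX = x := by
    ext i
    simp [hXX, hφ, WittVector.map_coeff, WittVector.coeff_mk]
  have hφY : WittVector.map φ YY = y := by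
    ext i
    simp [hYY, hφ, WittVector.map_coeff, WittVector.coeff_mk,
      (show ((1 : Fin 2) = 0) ↔ False by simp)]
  have key : (x * y).coeff k = φ ((XX * YY).coeff k) := by
    rw [← WittVector.map_coeff, map_mul, hφX, hφY]
  set f : MvPolynomial σ ℤ := (XX * YY).coeff k with hf
  have hfA : f ∈ Ideal.span (X '' A : Set (MvPolynomial σ ℤ)) := by
    apply mem_span_X_of_aeval_eq_zero
    set g : MvPolynomial σ ℤ →+* MvPolynomial σ ℤ :=
      (aeval fun v : σ => if v ∈ A then 0 else X v).toRingHom with hg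
    have h0 : WittVector.map g XX = 0 := by
      ext i
      have hmem : ((0, i) : σ) ∈ A := rfl
      simp [hXX, hg, WittVector.map_coeff, WittVector.coeff_mk, hmem]
    show g f = 0
    rw [hf, ← WittVector.map_coeff, map_mul, h0, zero_mul, WittVector.zero_coeff]
  have hfB : f ∈ Ideal.span (X '' B : Set (MvPolynomial σ ℤ)) := by
    apply mem_span_X_of_aeval_eq_zero
    set g : MvPolynomial σ ℤ →+* MvPolynomial σ ℤ :=
      (aeval fun v : σ => if v ∈ B then 0 else X v).toRingHom with hg
    have h0 : WittVector.map g YY = 0 := by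
      ext i
      have hmem : ((1, i) : σ) ∈ B := rfl
      simp [hYY, hg, WittVector.map_coeff, WittVector.coeff_mk, hmem]
    show g f = 0
    rw [hf, ← WittVector.map_coeff, map_mul, h0, mul_zero, WittVector.zero_coeff]
  have hAB : ∀ a ∈ A, ∀ b ∈ B, a ≠ b := by
    rintro a ha b hb rfl
    rw [hA] at ha
    rw [hB] at hb
    simp only [Set.mem_setOf_eq] at ha hb
    rw [ha] at hb
    exact absurd hb (by decide)
  have hspan := mem_span_monomial_of_mem_inter hAB hfA hfB
  have hmap : φ f ∈ Ideal.map φ (Ideal.span ((fun m => monomial m (1 : ℤ)) ''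
      {m | ∃ a ∈ A, ∃ b ∈ B, m = Finsupp.single a 1 + Finsupp.single b 1})) :=
    Ideal.mem_map_of_mem φ hspan
  rw [Ideal.map_span] at hmap
  have hle : Ideal.span (φ '' ((fun m => monomial m (1 : ℤ)) ''
      {m | ∃ a ∈ A, ∃ b ∈ B, m = Finsupp.single a 1 + Finsupp.single b 1})) ≤ ⊥ := by
    rw [Ideal.span_le]
    rintro _ ⟨_, ⟨m, ⟨a, ha, b, hb, rfl⟩, rfl⟩, rfl⟩
    have hmono : monomial (Finsupp.single a 1 + Finsupp.single b 1) (1 : ℤ)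
        = X a * X b := by
      rw [X, X, monomial_mul, one_mul]
    have hXI : ∀ v : σ, φ (X v) ∈ I := by
      intro v
      have : φ (X v) = if v.1 = 0 then x.coeff v.2 else y.coeff v.2 := by
        simp [hφ]
      rw [this]
      split_ifs
      · exact hx _
      · exact hy _
    have : φ (X a) * φ (X b) ∈ I ^ 2 := by
      rw [sq]
      exact Ideal.mul_mem_mul (hXI a) (hXI b)
    rw [hI] at this
    simpa [hmono] using this
  have := hle hmap
  rw [Ideal.mem_bot] at this
  rw [key, this]

lemma coeff_truncatedWittVectorMap {n : ℕ} {S : Type*} [CommRing S] (f : R →+* S)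
    (x : TruncatedWittVector p n R) (i : Fin n) :
    (truncatedWittVectorMap p n f x).coeff i = f (x.coeff i) := by
  have hx : WittVector.truncate n x.out = x := TruncatedWittVector.truncateFun_out x
  conv_lhs => rw [← hx]
  rw [truncatedWittVectorMap]
  erw [RingHom.liftOfRightInverse_comp_apply]
  simp [WittVector.coeff_truncate, WittVector.map_coeff, TruncatedWittVector.coeff_out]

lemma mem_ker_truncatedWittVectorMap {n : ℕ} (I : Ideal R)
    (x : TruncatedWittVector p n R) :
    x ∈ RingHom.ker (truncatedWittVectorMap p n (Ideal.Quotient.mk I)) ↔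
      ∀ i : Fin n, x.coeff i ∈ I := by
  rw [RingHom.mem_ker, TruncatedWittVector.ext_iff]
  refine forall_congr' fun i => ?_
  rw [coeff_truncatedWittVectorMap, TruncatedWittVector.coeff_zero,
    Ideal.Quotient.eq_zero_iff_mem]

lemma truncated_mul_eq_zero {n : ℕ} (I : Ideal R) (hI : I ^ 2 = ⊥)
    (x y : TruncatedWittVector p n R)
    (hx : ∀ i : Fin n, x.coeff i ∈ I) (hy : ∀ i : Fin n, y.coeff i ∈ I) :
    x * y = 0 := by
  have hout : ∀ (z : TruncatedWittVector p n R), (∀ i : Fin n, z.coeff i ∈ I) →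
      ∀ j : ℕ, z.out.coeff j ∈ I := by
    intro z hz j
    show (if h : j < n then z.coeff ⟨j, h⟩ else 0) ∈ I
    split_ifs
    · exact hz _
    · exact I.zero_mem
  have h1 : WittVector.truncate n x.out = x := TruncatedWittVector.truncateFun_out x
  have h2 : WittVector.truncate n y.out = y := TruncatedWittVector.truncateFun_out y
  rw [← h1, ← h2, ← map_mul]
  ext i
  rw [WittVector.coeff_truncate, TruncatedWittVector.coeff_zero]
  exact wittVector_mul_coeff_eq_zero I hI x.out y.out (hout x hx) (hout y hy) i

end WittLemmas

/-- if `I² = 0`, the kernel of `W_n(R) → W_n(R/I)` is a nilpotent ideal;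
in particular every truncated Witt vector with all components in `I` is nilpotent. -/
theorem stmt11 (p : ℕ) [Fact p.Prime] (n : ℕ) (hn : 0 < n)
    (R : Type*) [CommRing R] (I : Ideal R) (hI : I ^ 2 = ⊥) :
    ∃ N : ℕ,
      (RingHom.ker (truncatedWittVectorMap p n (Ideal.Quotient.mk I))) ^ N = ⊥ ∧
      ∀ x : TruncatedWittVector p n R, (∀ i : Fin n, x.coeff i ∈ I) → IsNilpotent x := by
  refine ⟨2, ?_, ?_⟩
  · refine le_antisymm ?_ bot_le
    rw [pow_two, Ideal.mul_le]
    intro r hr s hs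
    rw [Ideal.mem_bot]
    exact truncated_mul_eq_zero I hI r s
      ((mem_ker_truncatedWittVectorMap I r).1 hr)
      ((mem_ker_truncatedWittVectorMap I s).1 hs)
  · intro x hx
    exact ⟨2, by rw [pow_two]; exact truncated_mul_eq_zero I hI x x hx hx⟩
end

section
/- Let k be a perfect field of characteristic p > 0 and W(k) its ring of Witt vectors. Let M = F¹ ⊕ F⁰ be a direct sum of finite free W(k)-modules. Let g be a W(k)-linear automorphism of M whose reduction modulo p preserves the submodule F¹/pF¹ of M/pM. Then g can be written as a product g = u ∘ h ∘ w, where: u = 1_M + n₊ with n₊ ∈ Hom(F⁰,F¹) (extended by zero on F¹); h is an automorphism of M preserving both F¹ and F⁰; and w = 1_M + n₋ with n₋ ∈ p·Hom(F¹,F⁰) (extended by zero on F⁰), i.e. w reduces to the identity modulo p. -/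
open LinearMap

/-- Nakayama-type surjectivity criterion over a local ring. -/
private lemma aux_surj_of_local {R M : Type*} [CommRing R] [IsLocalRing R] [AddCommGroup M]
    [Module R M] [Module.Finite R M] (π : R) (hπ : π ∈ IsLocalRing.maximalIdeal R)
    (f : M →ₗ[R] M) (h : ∀ z : M, ∃ x w, z = f x + π • w) : Function.Surjective f := by
  have hjac : Ideal.span {π} ≤ Ideal.jacobson ⊥ := by
    rw [IsLocalRing.jacobson_eq_maximalIdeal ⊥ bot_ne_top]
    exact Ideal.span_le.mpr (Set.singleton_subset_iff.mpr hπ)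
  have hle : (⊤ : Submodule R M) ≤ LinearMap.range f ⊔ (Ideal.span {π}) • ⊤ := by
    intro z _
    obtain ⟨x, w, hz⟩ := h z
    rw [hz]
    exact Submodule.add_mem_sup (mem_range_self f x)
      (Submodule.smul_mem_smul (Ideal.mem_span_singleton_self π) Submodule.mem_top)
  rw [← range_eq_top]
  exact top_le_iff.mp (Submodule.le_of_le_smul_of_le_jacobson_bot Module.Finite.fg_top hjac hle)

/-- General Gaussian elimination over a local domain. -/
private theorem aux_gauss {R : Type*} [CommRing R] [IsDomain R] [IsLocalRing R]
    {F1 F0 : Type*} [AddCommGroup F1] [AddCommGroup F0]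
    [Module R F1] [Module R F0]
    [Module.Free R F1] [Module.Finite R F1]
    [Module.Free R F0] [Module.Finite R F0]
    (π : R) (hπ0 : π ≠ 0) (hπm : π ∈ IsLocalRing.maximalIdeal R)
    (g : (F1 × F0) ≃ₗ[R] (F1 × F0))
    (hg : ∀ x : F1, ∃ y : F0, (g (x, 0)).2 = π • y) :
    ∃ (nplus : F0 →ₗ[R] F1) (nminus : F1 →ₗ[R] F0)
      (h : (F1 × F0) ≃ₗ[R] (F1 × F0)),
      Submodule.map h.toLinearMap (LinearMap.range (LinearMap.inl R F1 F0)) =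
        LinearMap.range (LinearMap.inl R F1 F0) ∧
      Submodule.map h.toLinearMap (LinearMap.range (LinearMap.inr R F1 F0)) =
        LinearMap.range (LinearMap.inr R F1 F0) ∧
      g.toLinearMap =
        ((1 : Module.End R (F1 × F0)) +
            (LinearMap.inl R F1 F0) ∘ₗ nplus ∘ₗ (LinearMap.snd R F1 F0)) ∘ₗ
          h.toLinearMap ∘ₗ
          ((1 : Module.End R (F1 × F0)) +
            (LinearMap.inr R F1 F0) ∘ₗ (π • nminus) ∘ₗ (LinearMap.fst R F1 F0)) := by
  classical
  set a : F1 →ₗ[R] F1 := (fst R F1 F0) ∘ₗ g.toLinearMap ∘ₗ (inl R F1 F0) with ha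
  set b : F0 →ₗ[R] F1 := (fst R F1 F0) ∘ₗ g.toLinearMap ∘ₗ (inr R F1 F0) with hb
  set c : F1 →ₗ[R] F0 := (snd R F1 F0) ∘ₗ g.toLinearMap ∘ₗ (inl R F1 F0) with hc
  set d : F0 →ₗ[R] F0 := (snd R F1 F0) ∘ₗ g.toLinearMap ∘ₗ (inr R F1 F0) with hd
  -- divide c by π
  set σ : F0 →ₗ[R] F0 := π • LinearMap.id with hσ
  have hσapp : ∀ y : F0, σ y = π • y := fun y => rfl
  have hσinj : Function.Injective σ := fun x y hxy =>
    smul_right_injective F0 hπ0 (by simpa [hσapp] using hxy)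
  have hcrange : ∀ x, c x ∈ LinearMap.range σ := by
    intro x
    obtain ⟨y, hy⟩ := hg x
    exact ⟨y, ((hσapp y).trans hy.symm : σ y = c x)⟩
  set c' : F1 →ₗ[R] F0 :=
    (LinearEquiv.ofInjective σ hσinj).symm.toLinearMap ∘ₗ
      (c.codRestrict (LinearMap.range σ) hcrange) with hc'def
  have hc' : ∀ x, c x = π • c' x := by
    intro x
    have h1 : (LinearEquiv.ofInjective σ hσinj) (c' x) = ⟨c x, hcrange x⟩ :=
      (LinearEquiv.ofInjective σ hσinj).apply_symm_apply ⟨c x, hcrange x⟩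
    have h2 : σ (c' x) = c x := congrArg Subtype.val h1
    rw [← h2, hσapp]
  -- decompose g pointwise
  have hgxy : ∀ x y, g (x, y) = (a x + b y, c x + d y) := by
    intro x y
    have hxy : (x, y) = ((x, 0) : F1 × F0) + (0, y) := by simp
    rw [hxy, map_add]
    simp [ha, hb, hc, hd, Prod.ext_iff]
  -- d is surjective, hence bijective
  have hd_surj : Function.Surjective d := by
    apply aux_surj_of_local π hπm
    intro z
    rcases hq : g.symm (0, z) with ⟨x, y⟩
    have hz : g (x, y) = (0, z) := by rw [← hq, g.apply_symm_apply]
    rw [hgxy] at hz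
    have h2 : c x + d y = z := (Prod.ext_iff.mp hz).2
    exact ⟨y, c' x, by rw [← h2, hc' x, add_comm]⟩
  have hd_bij : Function.Bijective d :=
    ⟨OrzechProperty.injective_of_surjective_endomorphism d hd_surj, hd_surj⟩
  set dE : F0 ≃ₗ[R] F0 := LinearEquiv.ofBijective d hd_bij with hdE
  have hdE_app : ∀ y, dE y = d y := fun _ => rfl
  have hs1 : ∀ t, d (dE.symm t) = t := fun t => dE.apply_symm_apply t
  have hs2 : ∀ t, dE.symm (d t) = t := fun t => dE.symm_apply_apply t
  -- h1 := a - b ∘ dE.symm ∘ c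
  set h1 : F1 →ₗ[R] F1 := a - b ∘ₗ dE.symm.toLinearMap ∘ₗ c with hh1
  have hh1x : ∀ x, h1 x = a x - π • b (dE.symm (c' x)) := by
    intro x
    have : h1 x = a x - b (dE.symm (c x)) := rfl
    rw [this, hc' x, map_smul, map_smul]
  have hh1_surj : Function.Surjective h1 := by
    apply aux_surj_of_local π hπm
    intro z
    rcases hq : g.symm (z, 0) with ⟨x, y⟩
    have hz : g (x, y) = (z, 0) := by rw [← hq, g.apply_symm_apply]
    rw [hgxy] at hz
    have e1 : a x + b y = z := (Prod.ext_iff.mp hz).1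
    have e2 : c x + d y = 0 := (Prod.ext_iff.mp hz).2
    have hdy : d y = π • (-(c' x)) := by
      rw [smul_neg, ← hc' x, ← neg_eq_of_add_eq_zero_right e2]
    have hy : y = π • dE.symm (-(c' x)) := by
      apply hd_bij.1
      rw [map_smul, hs1, hdy]
    refine ⟨x, b (dE.symm (c' x)) + b (dE.symm (-(c' x))), ?_⟩
    rw [hh1x x, smul_add, ← e1, hy, map_smul]
    abel
  have hh1_bij : Function.Bijective h1 :=
    ⟨OrzechProperty.injective_of_surjective_endomorphism h1 hh1_surj, hh1_surj⟩
  set h1E : F1 ≃ₗ[R] F1 := LinearEquiv.ofBijective h1 hh1_bij with hh1E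
  have hh1E_app : ∀ x, h1E x = h1 x := fun _ => rfl
  -- the pieces
  refine ⟨b ∘ₗ dE.symm.toLinearMap, dE.symm.toLinearMap ∘ₗ c', h1E.prodCongr dE, ?_, ?_, ?_⟩
  · -- maps range inl to range inl
    apply le_antisymm
    · rintro z ⟨w, ⟨x, rfl⟩, rfl⟩
      exact ⟨h1 x, by simp [LinearEquiv.prodCongr_apply, hh1E_app]⟩
    · rintro z ⟨x, rfl⟩
      obtain ⟨x', hx'⟩ := hh1_surj x
      exact ⟨(x', 0), ⟨x', rfl⟩, by simp [LinearEquiv.prodCongr_apply, hh1E_app, hx']⟩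
  · -- maps range inr to range inr
    apply le_antisymm
    · rintro z ⟨w, ⟨y, rfl⟩, rfl⟩
      exact ⟨d y, by simp [LinearEquiv.prodCongr_apply, hdE_app]⟩
    · rintro z ⟨y, rfl⟩
      obtain ⟨y', hy'⟩ := hd_surj y
      exact ⟨(0, y'), ⟨y', rfl⟩, by simp [LinearEquiv.prodCongr_apply, hdE_app, hy']⟩
  · -- the factorization
    apply LinearMap.ext
    rintro ⟨x, y⟩
    have lhs : g.toLinearMap (x, y) = (a x + b y, c x + d y) := hgxy x y
    rw [lhs]
    simp only [comp_apply, LinearMap.add_apply, Module.End.one_apply, inl_apply, inr_apply, fst_apply,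
      snd_apply, LinearMap.smul_apply, LinearEquiv.coe_coe, LinearEquiv.prodCongr_apply, Prod.mk_add_mk,
      Prod.fst_add, Prod.snd_add, add_zero, zero_add, hh1E_app, hdE_app]
    rw [hh1x x]
    have hd2 : d (y + π • dE.symm (c' x)) = d y + c x := by
      rw [map_add, map_smul, hs1, ← hc' x]
    rw [hs2 (y + π • dE.symm (c' x)), hd2, Prod.mk.injEq]
    refine ⟨?_, add_comm _ _⟩
    rw [map_add, map_smul]
    abel

/-- Gaussian-elimination factorization. If `g` is a `W(k)`-linear
automorphism of `M = F¹ ⊕ F⁰` whose reduction mod `p` preserves `F¹/pF¹` (i.e. the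
`F⁰`-component of `g` on `F¹` is divisible by `p`), then `g = u ∘ h ∘ w` with
`u = 1 + nplus` (`nplus ∈ Hom(F⁰,F¹)`), `h` an automorphism preserving both summands, and
`w = 1 + p·nminus` (`nminus ∈ Hom(F¹,F⁰)`), so that `w ≡ 1 mod p`. -/
theorem stmt14 (p : ℕ) [Fact p.Prime] (k : Type*) [Field k] [CharP k p] [ExpChar k p]
    [PerfectRing k p]
    (F1 F0 : Type*) [AddCommGroup F1] [AddCommGroup F0]
    [Module (WittVector p k) F1] [Module (WittVector p k) F0]
    [Module.Free (WittVector p k) F1] [Module.Finite (WittVector p k) F1]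
    [Module.Free (WittVector p k) F0] [Module.Finite (WittVector p k) F0]
    (g : (F1 × F0) ≃ₗ[WittVector p k] (F1 × F0))
    (hg : ∀ x : F1, ∃ y : F0, (g (x, 0)).2 = (p : WittVector p k) • y) :
    ∃ (nplus : F0 →ₗ[WittVector p k] F1) (nminus : F1 →ₗ[WittVector p k] F0)
      (h : (F1 × F0) ≃ₗ[WittVector p k] (F1 × F0)),
      Submodule.map h.toLinearMap
          (LinearMap.range (LinearMap.inl (WittVector p k) F1 F0)) =
        LinearMap.range (LinearMap.inl (WittVector p k) F1 F0) ∧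
      Submodule.map h.toLinearMap
          (LinearMap.range (LinearMap.inr (WittVector p k) F1 F0)) =
        LinearMap.range (LinearMap.inr (WittVector p k) F1 F0) ∧
      g.toLinearMap =
        ((1 : Module.End (WittVector p k) (F1 × F0)) +
            (LinearMap.inl (WittVector p k) F1 F0) ∘ₗ nplus ∘ₗ
              (LinearMap.snd (WittVector p k) F1 F0)) ∘ₗ
          h.toLinearMap ∘ₗ
          ((1 : Module.End (WittVector p k) (F1 × F0)) +
            (LinearMap.inr (WittVector p k) F1 F0) ∘ₗ
              ((p : WittVector p k) • nminus) ∘ₗ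
              (LinearMap.fst (WittVector p k) F1 F0)) := by
  haveI : IsDiscreteValuationRing (WittVector p k) := WittVector.isDiscreteValuationRing
  have hπ0 : (p : WittVector p k) ≠ 0 := WittVector.p_nonzero p k
  have hπm : (p : WittVector p k) ∈ IsLocalRing.maximalIdeal (WittVector p k) :=
    (IsLocalRing.mem_maximalIdeal _).mpr
      (mem_nonunits_iff.mpr (WittVector.irreducible p).not_isUnit)
  exact aux_gauss (p : WittVector p k) hπ0 hπm g hg
end
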